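/- For every x ∈ X and every t ≥ 0, the diagonal heat kernel of the hierarchical Laplacian equals p(t,x,x) = (1 − 1/ν) Σ_{s=0}^∞ e^{−p^s t} / ν^s (in particular it is independent of x). -/

import Mathlib

noncomputable section
open scoped ENNReal

def HX (ν : ℕ) : Type := {x : ℕ → Fin ν // ∃ N, ∀ n, N ≤ n → (x n : ℕ) = 0}
instance (ν : ℕ) : DecidableEq (HX ν) := Classical.decEq _
abbrev Hl2 (ν : ℕ) : Type := lp (fun _ : HX ν => ℝ) 2
def cube (ν : ℕ) (r : ℕ) (x : HX ν) : Set (HX ν) := {y | ∀ n, r ≤ n → y.1 n = x.1 n}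
def hdelta (ν : ℕ) (x : HX ν) : Hl2 ν := lp.single 2 x 1
def cubeSum (ν r : ℕ) (x : HX ν) (ψ : Hl2 ν) : ℝ := ∑' y : cube ν r x, ψ y
def IsHierLap (ν : ℕ) (p : ℝ) (Δ : Hl2 ν →L[ℝ] Hl2 ν) : Prop :=
  ∀ ψ x, Δ ψ x = ∑' r : ℕ,
    (1 - p) * p ^ r * (((ν : ℝ) ^ (r + 1))⁻¹ * cubeSum ν (r + 1) x ψ - ψ x)

/-- Heat kernel `p(t,x,y) = ⟨exp(tΔ_h) δ_y, δ_x⟩`. -/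
def heatK (ν : ℕ) (Δ : Hl2 ν →L[ℝ] Hl2 ν) (t : ℝ) (x y : HX ν) : ℝ :=
  @inner ℝ _ _ (NormedSpace.exp (t • Δ) (hdelta ν y)) (hdelta ν x)

-- ------------- auxiliary development -------------

namespace HierAux

variable {ν : ℕ}

lemma mem_cube_self (r : ℕ) (x : HX ν) : x ∈ cube ν r x := fun _ _ => rfl

lemma cube_mono {r s : ℕ} (h : r ≤ s) (x : HX ν) : cube ν r x ⊆ cube ν s x :=
  fun y hy n hn => hy n (le_trans h hn)

lemma cube_symm {r : ℕ} {x y : HX ν} (h : y ∈ cube ν r x) : x ∈ cube ν r y :=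
  fun n hn => (h n hn).symm

lemma cube_eq_of_mem {r : ℕ} {x z : HX ν} (h : z ∈ cube ν r x) :
    cube ν r z = cube ν r x := by
  ext y
  constructor <;> intro hy n hn
  · exact (hy n hn).trans (h n hn)
  · exact (hy n hn).trans ((h n hn).symm)

/-- The cube of rank `r` is equivalent to `Fin r → Fin ν`. -/
def cubeEquiv (r : ℕ) (x : HX ν) : cube ν r x ≃ (Fin r → Fin ν) where
  toFun y i := y.1.1 i
  invFun g :=
    ⟨⟨fun n => if h : n < r then g ⟨n, h⟩ else x.1 n, by
        obtain ⟨N, hN⟩ := x.2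
        refine ⟨max r N, fun n hn => ?_⟩
        simp only [dif_neg (by omega : ¬ n < r)]
        exact hN n (le_trans (le_max_right _ _) hn)⟩,
      fun n hn => dif_neg (by omega : ¬ n < r)⟩
  left_inv y := by
    apply Subtype.ext; apply Subtype.ext; funext n
    by_cases h : n < r
    · simp [h]
    · simp only [dif_neg h]
      exact (y.2 n (by omega)).symm
  right_inv g := by funext i; simp [i.2]

instance (r : ℕ) (x : HX ν) : Fintype (cube ν r x) := Fintype.ofEquiv _ (cubeEquiv r x).symm

lemma card_cube (r : ℕ) (x : HX ν) : Fintype.card (cube ν r x) = ν ^ r := by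
  rw [Fintype.card_congr (cubeEquiv r x)]
  simp [Fintype.card_fun]

lemma toFinset_card_cube (r : ℕ) (x : HX ν) : (cube ν r x).toFinset.card = ν ^ r := by
  rw [Set.toFinset_card, card_cube]


/-- The normalized indicator of the cube of rank `s` around `x`. -/
def fvec (ν s : ℕ) (x : HX ν) : Hl2 ν :=
  ((ν : ℝ) ^ s)⁻¹ • ∑ y ∈ (cube ν s x).toFinset, hdelta ν y

open Classical in
lemma fvec_apply (s : ℕ) (x z : HX ν) :
    fvec ν s x z = if z ∈ cube ν s x then ((ν : ℝ) ^ s)⁻¹ else 0 := by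
  have h1 : (∑ y ∈ (cube ν s x).toFinset, hdelta ν y) z
      = ∑ y ∈ (cube ν s x).toFinset, (hdelta ν y) z := by
    rw [lp.coeFn_sum, Finset.sum_apply]
  have h2 : ∀ y : HX ν, (hdelta ν y) z = if z = y then (1:ℝ) else 0 := by
    intro y
    by_cases h : z = y
    · subst h; simp [hdelta, lp.single_apply_self]
    · simp only [hdelta, if_neg h]
      exact lp.single_apply_ne (E := fun _ : HX ν => ℝ) 2 y (1:ℝ) h
  have : fvec ν s x z = ((ν : ℝ) ^ s)⁻¹ *
      ∑ y ∈ (cube ν s x).toFinset, (if z = y then (1:ℝ) else 0) := by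
    rw [fvec, lp.coeFn_smul, Pi.smul_apply, h1, smul_eq_mul]
    congr 1
    exact Finset.sum_congr rfl (fun y _ => h2 y)
  rw [this, Finset.sum_ite_eq (cube ν s x).toFinset z (fun _ => (1:ℝ))]
  by_cases hz : z ∈ cube ν s x
  · simp [Set.mem_toFinset, hz]
  · simp [Set.mem_toFinset, hz]

lemma cubeSum_eq_sum (r : ℕ) (z : HX ν) (ψ : Hl2 ν) :
    cubeSum ν r z ψ = ∑ y ∈ (cube ν r z).toFinset, ψ y := by
  rw [cubeSum, tsum_fintype]
  exact Finset.sum_set_coe _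


open Classical in
lemma cubeSum_fvec (r s : ℕ) (x z : HX ν) :
    cubeSum ν r z (fvec ν s x) =
      if z ∈ cube ν (max r s) x then (ν : ℝ) ^ (min r s) * ((ν : ℝ) ^ s)⁻¹ else 0 := by
  rw [cubeSum_eq_sum, Finset.sum_congr rfl (fun y _ => fvec_apply s x y),
    ← Finset.sum_filter, Finset.sum_const, nsmul_eq_mul]
  rcases le_total r s with hrs | hsr
  · rw [max_eq_right hrs, min_eq_left hrs]
    by_cases hz : z ∈ cube ν s x
    · rw [Finset.filter_true_of_mem, toFinset_card_cube, if_pos hz, Nat.cast_pow]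
      intro y hy
      rw [Set.mem_toFinset] at hy
      have : y ∈ cube ν s z := cube_mono hrs z hy
      rwa [cube_eq_of_mem hz] at this
    · rw [Finset.filter_false_of_mem, if_neg hz]
      · simp
      · intro y hy hyx
        rw [Set.mem_toFinset] at hy
        exact hz (by rw [← cube_eq_of_mem hyx]; exact cube_symm (cube_mono hrs z hy))
  · rw [max_eq_left hsr, min_eq_right hsr]
    by_cases hz : z ∈ cube ν r x
    · have hfil : (cube ν r z).toFinset.filter (fun y => y ∈ cube ν s x)
          = (cube ν s x).toFinset := by
        ext y
        simp only [Finset.mem_filter, Set.mem_toFinset]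
        constructor
        · exact fun h => h.2
        · intro h
          refine ⟨?_, h⟩
          rw [cube_eq_of_mem hz]
          exact cube_mono hsr x h
      rw [hfil, toFinset_card_cube, if_pos hz, Nat.cast_pow]
    · rw [Finset.filter_false_of_mem, if_neg hz]
      · simp
      · intro y hy hyx
        rw [Set.mem_toFinset] at hy
        apply hz
        rw [← cube_eq_of_mem (cube_mono hsr x hyx)]
        exact cube_symm hy

/-- The normalized cube average of `fvec s x` evaluated at `z`. -/
lemma avg_fvec (hν : 0 < ν) (r s : ℕ) (x z : HX ν) :
    ((ν : ℝ) ^ r)⁻¹ * cubeSum ν r z (fvec ν s x) = fvec ν (max r s) x z := by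
  have hν' : ((ν : ℝ)) ≠ 0 := Nat.cast_ne_zero.mpr hν.ne'
  rw [cubeSum_fvec, fvec_apply]
  by_cases hz : z ∈ cube ν (max r s) x
  · rw [if_pos hz, if_pos hz]
    field_simp
    rw [← pow_add, ← pow_add, min_add_max]
  · rw [if_neg hz, if_neg hz, mul_zero]


/-- Eigenvector at level `s` around `x`. -/
def eFun (ν s : ℕ) (x : HX ν) : Hl2 ν := fvec ν s x - fvec ν (s + 1) x

lemma cubeSum_sub (r : ℕ) (z : HX ν) (ψ φ : Hl2 ν) :
    cubeSum ν r z (ψ - φ) = cubeSum ν r z ψ - cubeSum ν r z φ := by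
  simp only [cubeSum_eq_sum, ← Finset.sum_sub_distrib]
  exact Finset.sum_congr rfl fun y _ => by rw [lp.coeFn_sub, Pi.sub_apply]

lemma tsum_ite_geom {p : ℝ} (hp0 : 0 ≤ p) (hp1 : p < 1) (s : ℕ) (c : ℝ) :
    ∑' r : ℕ, (if r < s then (0:ℝ) else (1 - p) * p ^ r * c) = p ^ s * c := by
  have hne : (1 : ℝ) - p ≠ 0 := by linarith
  set f : ℕ → ℝ := fun r => if r < s then (0:ℝ) else (1 - p) * p ^ r * c with hf
  have h0 : ∑ i ∈ Finset.range s, f i = 0 := by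
    apply Finset.sum_eq_zero
    intro i hi
    rw [hf]
    simp [Finset.mem_range.mp hi]
  have h1 : HasSum (fun n : ℕ => f (n + s)) (p ^ s * c - ∑ i ∈ Finset.range s, f i) := by
    rw [h0, sub_zero]
    have h2 := (hasSum_geometric_of_lt_one hp0 hp1).mul_left ((1 - p) * p ^ s * c)
    have hv : (1 - p) * p ^ s * c * (1 - p)⁻¹ = p ^ s * c := by
      field_simp
    rw [hv] at h2
    have hfun : (fun n : ℕ => f (n + s)) = fun n : ℕ => (1 - p) * p ^ s * c * p ^ n := by
      funext n
      rw [hf]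
      simp only [if_neg (by omega : ¬ n + s < s)]
      rw [pow_add]
      ring
    rw [hfun]
    exact h2
  exact ((hasSum_nat_add_iff' s).mp h1).tsum_eq

lemma eigen (hν : 0 < ν) {p : ℝ} (hp0 : 0 < p) (hp1 : p < 1) {Δ : Hl2 ν →L[ℝ] Hl2 ν}
    (hΔ : IsHierLap ν p Δ) (s : ℕ) (x : HX ν) :
    Δ (eFun ν s x) = (-(p ^ s)) • eFun ν s x := by
  apply lp.ext
  funext z
  rw [lp.coeFn_smul, Pi.smul_apply, hΔ (eFun ν s x) z]
  have he : ∀ w : HX ν, eFun ν s x w = fvec ν s x w - fvec ν (s+1) x w := fun w => by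
    rw [eFun, lp.coeFn_sub, Pi.sub_apply]
  have hcs : ∀ r : ℕ, cubeSum ν r z (eFun ν s x)
      = cubeSum ν r z (fvec ν s x) - cubeSum ν r z (fvec ν (s+1) x) := fun r => by
    rw [eFun, cubeSum_sub]
  have hterm : ∀ r : ℕ,
      (1 - p) * p ^ r * (((ν:ℝ)^(r+1))⁻¹ * cubeSum ν (r+1) z (eFun ν s x) - eFun ν s x z)
      = if r < s then (0:ℝ) else (1 - p) * p ^ r * (-(eFun ν s x z)) := by
    intro r
    rw [hcs, mul_sub (((ν:ℝ)^(r+1))⁻¹) _ _, avg_fvec hν, avg_fvec hν, he z]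
    by_cases hr : r < s
    · rw [if_pos hr, max_eq_right (by omega : r + 1 ≤ s),
        max_eq_right (by omega : r + 1 ≤ s + 1)]
      ring
    · rw [if_neg hr, max_eq_left (by omega : s ≤ r + 1),
        max_eq_left (by omega : s + 1 ≤ r + 1)]
      ring
  rw [tsum_congr hterm, tsum_ite_geom hp0.le hp1, smul_eq_mul]
  ring


lemma exp_eigen (A : Hl2 ν →L[ℝ] Hl2 ν) (v : Hl2 ν) (c : ℝ) (h : A v = c • v) :
    NormedSpace.exp A v = Real.exp c • v := by
  have hpow : ∀ n : ℕ, (A ^ n) v = c ^ n • v := by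
    intro n
    induction n with
    | zero => simp
    | succ n ih =>
      rw [pow_succ, ContinuousLinearMap.mul_apply, h, map_smul, ih, smul_smul, ← pow_succ']
  have hsummable : Summable fun n : ℕ => (n.factorial⁻¹ : ℝ) • A ^ n :=
    NormedSpace.expSeries_summable' A
  have hmap := (ContinuousLinearMap.apply ℝ (Hl2 ν) v).map_tsum hsummable
  rw [NormedSpace.exp_eq_tsum ℝ]
  have happ : ∀ n : ℕ, (ContinuousLinearMap.apply ℝ (Hl2 ν) v) ((n.factorial⁻¹ : ℝ) • A ^ n)
      = ((n.factorial⁻¹ : ℝ) * c ^ n) • v := by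
    intro n
    simp only [ContinuousLinearMap.apply_apply, ContinuousLinearMap.smul_apply, hpow,
      smul_smul]
  have hsum2 : Summable fun n : ℕ => (n.factorial⁻¹ : ℝ) * c ^ n := by
    simpa [smul_eq_mul] using NormedSpace.expSeries_summable' (𝕂 := ℝ) (𝔸 := ℝ) c
  calc (∑' n : ℕ, (n.factorial⁻¹ : ℝ) • A ^ n) v
      = ∑' n : ℕ, ((n.factorial⁻¹ : ℝ) * c ^ n) • v := by
        rw [← tsum_congr happ]; exact hmap
    _ = (∑' n : ℕ, (n.factorial⁻¹ : ℝ) * c ^ n) • v := Summable.tsum_smul_const hsum2 v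
    _ = Real.exp c • v := by
        congr 1
        rw [Real.exp_eq_exp_ℝ, NormedSpace.exp_eq_tsum ℝ]
        simp [smul_eq_mul]


lemma norm_fvec (hν : 0 < ν) (s : ℕ) (x : HX ν) :
    ‖fvec ν s x‖ = (Real.sqrt ν)⁻¹ ^ s := by
  have hν' : (0:ℝ) < (ν:ℝ) := by exact_mod_cast hν
  have hns := lp.norm_sum_single (p := 2) (E := fun _ : HX ν => ℝ) (by norm_num)
    (fun _ => (1:ℝ)) (cube ν s x).toFinset
  have e2 : ((2:ℝ≥0∞)).toReal = ((2:ℕ):ℝ) := by norm_num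
  rw [e2] at hns
  simp only [Real.rpow_natCast] at hns
  have hns2 : ‖∑ y ∈ (cube ν s x).toFinset, hdelta ν y‖ ^ (2:ℕ) = (ν:ℝ) ^ s := by
    rw [show (fun y => hdelta ν y) = fun y => lp.single 2 y (1:ℝ) from rfl, hns]
    simp only [norm_one, one_pow, Finset.sum_const, nsmul_eq_mul, mul_one]
    rw [toFinset_card_cube, Nat.cast_pow]
  have hnorm : ‖fvec ν s x‖ = ((ν:ℝ) ^ s)⁻¹ * ‖∑ y ∈ (cube ν s x).toFinset, hdelta ν y‖ := by
    rw [fvec, norm_smul, norm_inv, norm_pow, Real.norm_natCast]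
  have ha : (0:ℝ) ≤ ‖fvec ν s x‖ := norm_nonneg _
  have hb : (0:ℝ) ≤ (Real.sqrt ν)⁻¹ ^ s :=
    pow_nonneg (inv_nonneg.mpr (Real.sqrt_nonneg _)) s
  have hne : ((ν:ℝ) ^ s) ≠ 0 := pow_ne_zero _ hν'.ne'
  have hr : ((Real.sqrt ν)⁻¹ ^ s) ^ 2 = ((ν:ℝ) ^ s)⁻¹ := by
    rw [← pow_mul, mul_comm s 2, pow_mul, inv_pow, Real.sq_sqrt hν'.le, inv_pow]
  have hl : ‖fvec ν s x‖ ^ 2 = ((ν:ℝ) ^ s)⁻¹ := by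
    rw [hnorm, mul_pow, hns2]
    field_simp
  have hsq : ‖fvec ν s x‖ ^ 2 = ((Real.sqrt ν)⁻¹ ^ s) ^ 2 := by rw [hl, hr]
  have := congrArg Real.sqrt hsq
  rwa [Real.sqrt_sq ha, Real.sqrt_sq hb] at this

lemma sqrt_inv_lt_one (hν : 2 ≤ ν) : (Real.sqrt ν)⁻¹ < 1 := by
  have h1 : (1:ℝ) < Real.sqrt ν := by
    rw [show (1:ℝ) = Real.sqrt 1 by simp]
    apply Real.sqrt_lt_sqrt (by norm_num)
    exact_mod_cast Nat.lt_of_lt_of_le one_lt_two hν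
  rw [inv_lt_one_iff₀]
  right
  exact h1

lemma norm_eFun_le (hν : 2 ≤ ν) (s : ℕ) (x : HX ν) :
    ‖eFun ν s x‖ ≤ 2 * (Real.sqrt ν)⁻¹ ^ s := by
  have hq0 : (0:ℝ) ≤ (Real.sqrt ν)⁻¹ := inv_nonneg.mpr (Real.sqrt_nonneg _)
  have hq1 : (Real.sqrt ν)⁻¹ ≤ 1 := (sqrt_inv_lt_one hν).le
  calc ‖eFun ν s x‖ ≤ ‖fvec ν s x‖ + ‖fvec ν (s+1) x‖ := norm_sub_le _ _
    _ = (Real.sqrt ν)⁻¹ ^ s + (Real.sqrt ν)⁻¹ ^ (s+1) := by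
        rw [norm_fvec (by omega), norm_fvec (by omega)]
    _ ≤ (Real.sqrt ν)⁻¹ ^ s + (Real.sqrt ν)⁻¹ ^ s := by
        have h := pow_le_pow_of_le_one hq0 hq1 (Nat.le_succ s)
        simp only [Nat.succ_eq_add_one] at h
        linarith
    _ = 2 * (Real.sqrt ν)⁻¹ ^ s := by ring

lemma fvec_zero (x : HX ν) : fvec ν 0 x = hdelta ν x := by
  have hc : cube ν 0 x = {x} := by
    ext y
    constructor
    · intro hy
      have : y = x := Subtype.ext (funext fun n => hy n (Nat.zero_le n))
      simp [this]
    · intro hy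
      rw [Set.mem_singleton_iff] at hy
      subst hy
      exact mem_cube_self 0 y
  rw [fvec, Set.toFinset_congr hc]
  simp

lemma summable_eFun (hν : 2 ≤ ν) (x : HX ν) : Summable (fun s => eFun ν s x) := by
  have hq0 : (0:ℝ) ≤ (Real.sqrt ν)⁻¹ := inv_nonneg.mpr (Real.sqrt_nonneg _)
  refine Summable.of_norm_bounded
    ((summable_geometric_of_lt_one hq0 (sqrt_inv_lt_one hν)).mul_left 2) ?_
  exact fun s => norm_eFun_le hν s x

lemma hasSum_eFun (hν : 2 ≤ ν) (x : HX ν) :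
    HasSum (fun s => eFun ν s x) (hdelta ν x) := by
  have hq0 : (0:ℝ) ≤ (Real.sqrt ν)⁻¹ := inv_nonneg.mpr (Real.sqrt_nonneg _)
  obtain ⟨L, hL⟩ := summable_eFun hν x
  have hpartial : ∀ n : ℕ, ∑ i ∈ Finset.range n, eFun ν i x = hdelta ν x - fvec ν n x := by
    intro n
    have h := Finset.sum_range_sub' (fun i => fvec ν i x) n
    rw [fvec_zero] at h
    exact h
  have htend0 : Filter.Tendsto (fun n => fvec ν n x) Filter.atTop (nhds 0) := by
    rw [tendsto_zero_iff_norm_tendsto_zero]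
    simp only [norm_fvec (show 0 < ν by omega)]
    exact tendsto_pow_atTop_nhds_zero_of_lt_one hq0 (sqrt_inv_lt_one hν)
  have htend : Filter.Tendsto (fun n => ∑ i ∈ Finset.range n, eFun ν i x)
      Filter.atTop (nhds (hdelta ν x)) := by
    simp only [hpartial]
    have h2 := Filter.Tendsto.const_sub (hdelta ν x) htend0
    rwa [sub_zero] at h2
  have := tendsto_nhds_unique (hL.tendsto_sum_nat) htend
  rwa [this] at hL


lemma inner_hdelta_left (x : HX ν) (f : Hl2 ν) :
    @inner ℝ _ _ (hdelta ν x) f = f x := by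
  rw [hdelta, lp.inner_single_left]
  simp [RCLike.inner_apply]

lemma eFun_self (s : ℕ) (x : HX ν) :
    eFun ν s x x = ((ν:ℝ) ^ s)⁻¹ - ((ν:ℝ) ^ (s+1))⁻¹ := by
  rw [eFun, lp.coeFn_sub, Pi.sub_apply, fvec_apply, fvec_apply,
    if_pos (mem_cube_self s x), if_pos (mem_cube_self (s+1) x)]

end HierAux

open HierAux in
theorem stmt5 (ν : ℕ) (hν : 2 ≤ ν) (p : ℝ) (hp0 : 0 < p) (hp1 : p < 1)
    (Δ : Hl2 ν →L[ℝ] Hl2 ν) (hΔ : IsHierLap ν p Δ) :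
    ∀ x : HX ν, ∀ t : ℝ, 0 ≤ t →
      heatK ν Δ t x x =
        (1 - (ν : ℝ)⁻¹) * ∑' s : ℕ, Real.exp (-(p ^ s * t)) / (ν : ℝ) ^ s := by
  intro x t ht
  have hν0 : 0 < ν := by omega
  have hνR : (0:ℝ) < (ν:ℝ) := by exact_mod_cast hν0
  have hexp : ∀ s : ℕ, NormedSpace.exp (t • Δ) (eFun ν s x)
      = Real.exp (-(p ^ s * t)) • eFun ν s x := by
    intro s
    have h1 : (t • Δ) (eFun ν s x) = (-(p ^ s * t)) • eFun ν s x := by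
      rw [ContinuousLinearMap.smul_apply, eigen hν0 hp0 hp1 hΔ s x, smul_smul]
      ring_nf
    exact exp_eigen _ _ _ h1
  have hdec := hasSum_eFun hν x
  have hsumE := summable_eFun hν x
  have h2 : NormedSpace.exp (t • Δ) (hdelta ν x)
      = ∑' s : ℕ, Real.exp (-(p ^ s * t)) • eFun ν s x := by
    rw [← hdec.tsum_eq, ContinuousLinearMap.map_tsum _ hsumE]
    exact tsum_congr hexp
  have hsum2 : Summable (fun s : ℕ => Real.exp (-(p ^ s * t)) • eFun ν s x) := by
    have hq0 : (0:ℝ) ≤ (Real.sqrt ν)⁻¹ := inv_nonneg.mpr (Real.sqrt_nonneg _)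
    refine Summable.of_norm_bounded
      ((summable_geometric_of_lt_one hq0 (sqrt_inv_lt_one hν)).mul_left 2) ?_
    intro s
    rw [norm_smul, Real.norm_eq_abs, abs_of_pos (Real.exp_pos _)]
    have he1 : Real.exp (-(p ^ s * t)) ≤ 1 := by
      rw [Real.exp_le_one_iff]
      have : (0:ℝ) ≤ p ^ s * t := mul_nonneg (pow_nonneg hp0.le s) ht
      linarith
    calc Real.exp (-(p ^ s * t)) * ‖eFun ν s x‖ ≤ 1 * ‖eFun ν s x‖ :=
          mul_le_mul_of_nonneg_right he1 (norm_nonneg _)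
      _ = ‖eFun ν s x‖ := one_mul _
      _ ≤ 2 * (Real.sqrt ν)⁻¹ ^ s := norm_eFun_le hν s x
  have hS := (innerSL ℝ (hdelta ν x)).map_tsum hsum2
  rw [heatK, h2, real_inner_comm]
  rw [show @inner ℝ _ _ (hdelta ν x) (∑' s : ℕ, Real.exp (-(p ^ s * t)) • eFun ν s x)
      = (innerSL ℝ (hdelta ν x)) (∑' s : ℕ, Real.exp (-(p ^ s * t)) • eFun ν s x) from rfl,
    hS]
  rw [← tsum_mul_left]
  apply tsum_congr
  intro s
  rw [show (innerSL ℝ (hdelta ν x)) (Real.exp (-(p ^ s * t)) • eFun ν s x)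
      = @inner ℝ _ _ (hdelta ν x) (Real.exp (-(p ^ s * t)) • eFun ν s x) from rfl,
    real_inner_smul_right, inner_hdelta_left, eFun_self]
  have hne : ((ν:ℝ) ^ s) ≠ 0 := pow_ne_zero _ hνR.ne'
  have hne2 : ((ν:ℝ)) ≠ 0 := hνR.ne'
  rw [pow_succ]
  field_simp
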